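/- Existence of a transfer matrix moving boundary data one step: Let q ≤ r and Q = [[α,β],[γ,δ]] ∈ 𝓜_⊲(q,r). Suppose u, v₋ ∈ ℂ^q and u₊, v₊ ∈ ℂ^r satisfy u = αv₋ + βu₊ and v₊ = γv₋ + δu₊, and suppose (u, v₋) ≠ (0, 0). Then there exists a transfer matrix T ∈ 𝕋_Q such that (u₊; v₊) = T·(u; v₋), where (u; v₋) ∈ ℂ^{2q} and (u₊; v₊) ∈ ℂ^{2r} denote the stacked column vectors. -/

import Mathlib

open Matrix

noncomputable section

/-- `Q ∈ 𝓜_⊲(q,r)`: the upper-right block `β` is surjective as a linear map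
(full rank `q`). -/
def MSub {q r : ℕ} (Q : Matrix (Fin q ⊕ Fin r) (Fin q ⊕ Fin r) ℂ) : Prop :=
  Function.Surjective Q.toBlocks₁₂.mulVecLin

/-- `𝔹_Q`: the set of right inverses of the upper-right block `β` of `Q`. -/
def BSet {q r : ℕ} (Q : Matrix (Fin q ⊕ Fin r) (Fin q ⊕ Fin r) ℂ) :
    Set (Matrix (Fin r) (Fin q) ℂ) :=
  {B | Q.toBlocks₁₂ * B = 1}

/-- `𝔉_Q`: the set of `𝔟` with `β 𝔟 = α`. -/
def FSet {q r : ℕ} (Q : Matrix (Fin q ⊕ Fin r) (Fin q ⊕ Fin r) ℂ) :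
    Set (Matrix (Fin r) (Fin q) ℂ) :=
  {b | Q.toBlocks₁₂ * b = Q.toBlocks₁₁}

/-- The set `𝕋_Q` of transfer matrices associated with `Q`. -/
def TTSet {q r : ℕ} (Q : Matrix (Fin q ⊕ Fin r) (Fin q ⊕ Fin r) ℂ) :
    Set (Matrix (Fin r ⊕ Fin r) (Fin q ⊕ Fin q) ℂ) :=
  {T | ∃ B ∈ BSet Q, ∃ b ∈ FSet Q,
    T = fromBlocks B (-b) (Q.toBlocks₂₂ * B) (Q.toBlocks₂₁ - Q.toBlocks₂₂ * b)}

/-- The standard symplectic matrix `J_m = [[0, −1],[1, 0]]`. -/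
def Jm (m : ℕ) : Matrix (Fin m ⊕ Fin m) (Fin m ⊕ Fin m) ℂ :=
  fromBlocks 0 (-1) 1 0


private theorem aux_rank_one {m n p : ℕ} (β : Matrix (Fin m) (Fin p) ℂ) (w : Fin p → ℂ)
    (hw : β.mulVec w = 0) (y : Fin n → ℂ) (hy : y ≠ 0) :
    ∃ K : Matrix (Fin p) (Fin n) ℂ, β * K = 0 ∧ K.mulVec y = w := by
  obtain ⟨i, hi⟩ := Function.ne_iff.mp hy
  refine ⟨fun a b => w a * (if b = i then (y i)⁻¹ else 0), ?_, ?_⟩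
  · ext c b
    have h0 : β.mulVec w c = 0 := by rw [hw]; rfl
    simp only [Matrix.mulVec, dotProduct] at h0
    show ∑ x, β c x * (w x * (if b = i then (y i)⁻¹ else 0)) = 0
    simp only [Matrix.zero_apply, mul_ite, mul_zero, Finset.sum_ite_irrel, Finset.sum_const_zero]
    split
    · calc ∑ x, β c x * (w x * (y i)⁻¹) = (∑ x, β c x * w x) * (y i)⁻¹ := by
            rw [Finset.sum_mul]; congr 1; funext x; ring
        _ = 0 := by rw [h0, zero_mul]
    · simp
  · funext a
    simp only [Matrix.mulVec, dotProduct, mul_ite, mul_zero, ite_mul, zero_mul, mul_assoc]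
    rw [Finset.sum_ite_eq' Finset.univ i (fun b => w a * ((y i)⁻¹ * y b))]
    simp [inv_mul_cancel₀ (by simpa using hi : y i ≠ 0)]

private theorem exists_right_inv {m p : ℕ} (β : Matrix (Fin m) (Fin p) ℂ)
    (hβ : Function.Surjective β.mulVecLin) :
    ∃ B : Matrix (Fin p) (Fin m) ℂ, β * B = 1 := by
  obtain ⟨g, hg⟩ := β.mulVecLin.exists_rightInverse_of_surjective
    (LinearMap.range_eq_top.mpr hβ)
  refine ⟨LinearMap.toMatrix' g, ?_⟩
  apply Matrix.toLin'.injective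
  rw [Matrix.toLin'_apply', Matrix.mulVecLin_mul, Matrix.toLin'_apply', Matrix.mulVecLin_one]
  rw [show (LinearMap.toMatrix' g).mulVecLin = g from Matrix.toLin'_toMatrix' g]
  exact hg

/-- Existence of a transfer matrix moving boundary data one step: if
`u = α v₋ + β u₊` and `v₊ = γ v₋ + δ u₊` with `(u, v₋) ≠ (0,0)`, then there is
`T ∈ 𝕋_Q` with `(u₊; v₊) = T (u; v₋)`. -/
theorem exists_transfer_matrix {q r : ℕ} (hqr : q ≤ r)
    (Q : Matrix (Fin q ⊕ Fin r) (Fin q ⊕ Fin r) ℂ)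
    (hQ : MSub Q)
    (u vm : Fin q → ℂ) (up vp : Fin r → ℂ)
    (h1 : u = Q.toBlocks₁₁.mulVec vm + Q.toBlocks₁₂.mulVec up)
    (h2 : vp = Q.toBlocks₂₁.mulVec vm + Q.toBlocks₂₂.mulVec up)
    (hne : ¬(u = 0 ∧ vm = 0)) :
    ∃ T ∈ TTSet Q, T.mulVec (Sum.elim u vm) = Sum.elim up vp := by
  set α := Q.toBlocks₁₁ with hα
  set β := Q.toBlocks₁₂ with hβ
  set γ := Q.toBlocks₂₁ with hγ
  set δ := Q.toBlocks₂₂ with hδ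
  obtain ⟨B₀, hB₀⟩ := exists_right_inv β hQ
  -- the key claim
  suffices h : ∃ B ∈ BSet Q, ∃ b ∈ FSet Q, B.mulVec u - b.mulVec vm = up by
    obtain ⟨B, hB, b, hb, key⟩ := h
    refine ⟨fromBlocks B (-b) (δ * B) (γ - δ * b), ⟨B, hB, b, hb, rfl⟩, ?_⟩
    rw [Matrix.fromBlocks_mulVec]
    have htop : B.mulVec u + (-b).mulVec vm = up := by
      rw [Matrix.neg_mulVec]; rw [← key]; ring_nf
    have hbot : (δ * B).mulVec u + (γ - δ * b).mulVec vm = vp := by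
      rw [Matrix.sub_mulVec, ← Matrix.mulVec_mulVec, ← Matrix.mulVec_mulVec, h2]
      rw [show δ.mulVec (B.mulVec u) + (γ.mulVec vm - δ.mulVec (b.mulVec vm))
          = γ.mulVec vm + δ.mulVec (B.mulVec u - b.mulVec vm) by
        rw [Matrix.mulVec_sub]; ring_nf]
      rw [key]
    simp only [Sum.elim_comp_inl, Sum.elim_comp_inr]
    rw [htop, hbot]
  -- common data
  have hu' : u - α.mulVec vm = β.mulVec up := by rw [h1]; ring_nf
  set w : Fin r → ℂ := up - B₀.mulVec (β.mulVec up) with hwdef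
  have hw : β.mulVec w = 0 := by
    rw [hwdef, Matrix.mulVec_sub, Matrix.mulVec_mulVec, Matrix.mulVec_mulVec, hB₀, Matrix.one_mul, sub_self]
  have hBα : β * (B₀ * α) = α := by rw [← Matrix.mul_assoc, hB₀, Matrix.one_mul]
  have hB₀u : B₀.mulVec u - B₀.mulVec (α.mulVec vm) = B₀.mulVec (β.mulVec up) := by
    rw [← Matrix.mulVec_sub, hu']
  rcases (not_and_or.mp hne) with hu | hv
  · obtain ⟨K, hK1, hK2⟩ := aux_rank_one β w hw u hu
    refine ⟨B₀ + K, ?_, B₀ * α, hBα, ?_⟩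
    · show β * (B₀ + K) = 1
      rw [Matrix.mul_add, hB₀, hK1, add_zero]
    · rw [Matrix.add_mulVec, hK2,
        show (B₀ * α).mulVec vm = B₀.mulVec (α.mulVec vm) from
          (Matrix.mulVec_mulVec _ _ _).symm]
      rw [show B₀.mulVec u + w - B₀.mulVec (α.mulVec vm)
          = (B₀.mulVec u - B₀.mulVec (α.mulVec vm)) + w by ring_nf, hB₀u, hwdef]
      ring_nf
  · obtain ⟨K, hK1, hK2⟩ := aux_rank_one β (-w) (by rw [Matrix.mulVec_neg, hw, neg_zero]) vm hv
    refine ⟨B₀, hB₀, B₀ * α + K, ?_, ?_⟩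
    · show β * (B₀ * α + K) = α
      rw [Matrix.mul_add, hBα, hK1, add_zero]
    · rw [Matrix.add_mulVec, hK2,
        show (B₀ * α).mulVec vm = B₀.mulVec (α.mulVec vm) from
          (Matrix.mulVec_mulVec _ _ _).symm]
      rw [show B₀.mulVec u - (B₀.mulVec (α.mulVec vm) + -w)
          = (B₀.mulVec u - B₀.mulVec (α.mulVec vm)) + w by ring_nf, hB₀u, hwdef]
      ring_nf


end
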